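/- Let l and m be natural numbers with m < l and l−m even. Then for every real x with x² ≠ 1, 𝒫_{l−m−1}(x,l) = (N_l^m / ((l−m)(l+m+1))) · 𝒫_l^{m+1}(x), where N_l^m = (−1)^m · binom(l, (l−m)/2) · (l−m)!!·(l−m)!/(l+m−1)!! (with the convention (−1)!! = 1) and 𝒫_l^{m+1}(x) = (−1)^{m+1} · (d^{m+1}/dx^{m+1}) P_l(x). -/

import Mathlib

open Polynomial

section Aux

lemma iteratedDeriv_eval_aux (r : ℝ[X]) (n : ℕ) :
    iteratedDeriv n (fun x : ℝ => r.eval x) = fun x => (derivative^[n] r).eval x := by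
  induction n with
  | zero => simp
  | succ n ih =>
    rw [iteratedDeriv_succ, ih]
    funext x
    rw [Function.iterate_succ_apply']
    exact Polynomial.deriv _

lemma odeBase_aux (l : ℕ) (hl : 1 ≤ l) :
    ((X:ℝ[X])^2 - 1) * derivative (((X:ℝ[X])^2-1)^l)
      = C (2*(l:ℝ)) * (X * ((X:ℝ[X])^2-1)^l) := by
  rw [derivative_pow]
  have : ((X:ℝ[X])^2 - 1)^(l-1) * ((X:ℝ[X])^2-1) = ((X:ℝ[X])^2-1)^l := by
    rw [← pow_succ]; congr 1; omega
  simp only [derivative_sub, derivative_one, derivative_X_pow]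
  rw [← this]
  push_cast
  simp only [map_mul, map_ofNat]
  ring

lemma ode_aux (l : ℕ) (hl : 1 ≤ l) (n : ℕ) :
    ((X:ℝ[X])^2 - 1) * derivative^[n+2] (((X:ℝ[X])^2-1)^l)
      = C (2*(l:ℝ) - 2*n - 2) * (X * derivative^[n+1] (((X:ℝ[X])^2-1)^l))
        + C (((n:ℝ)+1)*(2*l - n)) * derivative^[n] (((X:ℝ[X])^2-1)^l) := by
  induction n with
  | zero =>
    have h := congrArg derivative (odeBase_aux l hl)
    simp only [derivative_mul, derivative_sub, derivative_one, derivative_X_pow, derivative_C,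
      derivative_X, pow_one] at h
    simp only [Function.iterate_succ_apply', Function.iterate_zero_apply]
    simp only [map_sub, map_add, map_mul, map_ofNat, map_one, map_natCast, Nat.cast_zero,
      map_zero] at h ⊢
    linear_combination h
  | succ n ih =>
    have h := congrArg derivative ih
    simp only [derivative_mul, derivative_add, derivative_sub, derivative_one, derivative_X_pow,
      derivative_C, derivative_X, pow_one] at h
    simp only [Function.iterate_succ_apply'] at h ⊢
    push_cast at h ⊢
    simp only [map_sub, map_add, map_mul, map_ofNat, map_one, map_natCast] at h ⊢
    linear_combination h

lemma dvd_iter_aux (l k : ℕ) (hk : k ≤ l) :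
    ((X:ℝ[X]) - 1)^(l-k) ∣ derivative^[k] (((X:ℝ[X])^2-1)^l) := by
  induction k with
  | zero =>
    simp only [Nat.sub_zero, Function.iterate_zero_apply]
    have : ((X:ℝ[X])^2 - 1) = (X - 1) * (X + 1) := by ring
    rw [this, mul_pow]
    exact Dvd.intro _ rfl
  | succ k ih =>
    obtain ⟨r, hr⟩ := ih (le_of_lt (Nat.lt_of_succ_le hk))
    set j := l - (k+1) with hj
    have h1 : l - k = j + 1 := by omega
    rw [h1] at hr
    refine ⟨C ((j:ℝ)+1) * r + (X - 1) * derivative r, ?_⟩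
    rw [Function.iterate_succ_apply', hr, derivative_mul, derivative_pow, derivative_sub,
      derivative_X, derivative_one, sub_zero, mul_one, Nat.add_sub_cancel]
    push_cast
    ring

lemma eval_one_iter_aux (l k : ℕ) (hk : k < l) :
    ((derivative^[k] (((X:ℝ[X])^2-1)^l))).eval 1 = 0 := by
  obtain ⟨r, hr⟩ := dvd_iter_aux l k (le_of_lt hk)
  rw [hr]
  have : l - k ≠ 0 := by omega
  simp [zero_pow this]

lemma main_ident_aux (l : ℕ) (hl : 1 ≤ l) : ∀ μ, μ ≤ l →
    derivative^[l-μ] (((X:ℝ[X])^2-1)^l)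
      = C ((Nat.factorial (l-μ) : ℝ)/(Nat.factorial (l+μ) : ℝ))
          * (((X:ℝ[X])^2-1)^μ * derivative^[l+μ] (((X:ℝ[X])^2-1)^l)) := by
  intro μ
  induction μ with
  | zero => simp [Nat.factorial_ne_zero]
  | succ μ ih =>
    intro hμ
    have ihh := ih (by omega)
    set p : ℝ[X] := ((X:ℝ[X])^2-1)^l with hp
    set c' : ℝ := (Nat.factorial (l-(μ+1)) : ℝ)/(Nat.factorial (l+(μ+1)) : ℝ) with hc'
    set G : ℝ[X] := derivative^[l-(μ+1)] p - C c' * (((X:ℝ[X])^2-1)^(μ+1) * derivative^[l+(μ+1)] p)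
      with hG
    have hcc : (((l:ℝ)+μ+1)*((l:ℝ)-μ)) * c'
        = (Nat.factorial (l-μ) : ℝ)/(Nat.factorial (l+μ) : ℝ) := by
      rw [hc']
      have h1 : l - μ = (l - (μ+1)) + 1 := by omega
      have h2 : l + (μ+1) = (l + μ) + 1 := rfl
      have h3 : ((l:ℝ) - μ) = ((l - μ : ℕ) : ℝ) := by
        rw [Nat.cast_sub (by omega)]
      have h4 : ((l:ℝ) + μ + 1) = ((l + μ + 1 : ℕ) : ℝ) := by push_cast; ring
      rw [h3, h4, h1, h2, Nat.factorial_succ, Nat.factorial_succ]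
      have f1 : (Nat.factorial (l - (μ+1)) : ℝ) ≠ 0 := Nat.cast_ne_zero.2 (Nat.factorial_ne_zero _)
      have f2 : (Nat.factorial (l + μ) : ℝ) ≠ 0 := Nat.cast_ne_zero.2 (Nat.factorial_ne_zero _)
      have f3 : ((l + μ + 1 : ℕ) : ℝ) ≠ 0 := by positivity
      push_cast
      field_simp
    have e1 : derivative (derivative^[l-(μ+1)] p) = derivative^[l-μ] p := by
      rw [show l-μ = (l-(μ+1))+1 by omega, Function.iterate_succ_apply']
    have e2 : derivative (derivative^[l+(μ+1)] p) = derivative^[l+μ+2] p := by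
      rw [show l+μ+2 = (l+(μ+1))+1 by omega, Function.iterate_succ_apply']
    have e3 : derivative^[l+(μ+1)] p = derivative^[l+μ+1] p := rfl
    have hode := ode_aux l hl (l+μ)
    have hd : derivative G = 0 := by
      rw [hG, derivative_sub, derivative_mul, derivative_C, derivative_mul, derivative_pow,
        e1, e2, e3, ihh]
      have expand : ((X:ℝ[X])^2-1)^(μ+1) * derivative^[l+μ+2] p
          = ((X:ℝ[X])^2-1)^μ * (((X:ℝ[X])^2-1) * derivative^[l+μ+2] p) := by
        rw [pow_succ]; ring
      rw [expand, hode, ← hcc]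
      simp only [derivative_sub, derivative_X_pow, derivative_one, Nat.add_sub_cancel,
        map_sub, map_add, map_mul, map_ofNat, map_one, map_natCast, pow_one]
      push_cast
      ring
    have hGC := Polynomial.eq_C_of_derivative_eq_zero hd
    have hev : G.eval 1 = 0 := by
      rw [hG]
      simp [eval_one_iter_aux l (l-(μ+1)) (by omega), hp]
    have hG0 : G = 0 := by
      rw [hGC] at hev ⊢
      simpa using hev
    rw [← sub_eq_zero, ← hG]
    exact hG0

lemma key_nat_aux (m k : ℕ) (hk : 1 ≤ k) :
    2^(m+2*k) * Nat.factorial (m+2*k) * Nat.doubleFactorial (2*(k+m)-1)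
      = Nat.factorial (2*(k+m)) * Nat.choose (m+2*k) k * Nat.doubleFactorial (2*k) := by
  have h1 : Nat.factorial (2*(k+m))
      = Nat.doubleFactorial (2*(k+m)) * Nat.doubleFactorial (2*(k+m)-1) := by
    rw [show 2*(k+m) = (2*(k+m)-1)+1 by omega, Nat.factorial_eq_mul_doubleFactorial,
      Nat.add_sub_cancel]
  have h2 := Nat.doubleFactorial_two_mul (k+m)
  have h3 := Nat.doubleFactorial_two_mul k
  have h4 := Nat.choose_mul_factorial_mul_factorial (show k ≤ m+2*k by omega)
  rw [show m+2*k-k = k+m by omega] at h4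
  have h5 : (4:ℕ)^k = 2^(k*2) := by
    rw [show (4:ℕ) = 2^2 by norm_num, ← pow_mul, mul_comm]
  rw [h1, h2, h3, ← h4, pow_add, pow_mul]
  ring_nf
  rw [h5]

lemma const_ident_aux (l m k : ℕ) (hk : 1 ≤ k) (hl : l = m + 2*k) :
    (-1:ℝ)^l * ((Nat.factorial (l-(m+1)) : ℝ)/(Nat.factorial (l+(m+1)) : ℝ)) * (-1)^(m+1)
      = ((-1:ℝ)^m * (Nat.choose l ((l-m)/2) : ℝ) *
          ((Nat.doubleFactorial (l-m) : ℝ) * (Nat.factorial (l-m) : ℝ))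
            / (Nat.doubleFactorial (l+m-1) : ℝ))
        / (((l:ℝ)-(m:ℝ)) * ((l:ℝ)+(m:ℝ)+1))
          * ((-1:ℝ)^(m+1) * (1/(2^l * (Nat.factorial l : ℝ)))) := by
  subst hl
  rw [show m+2*k-(m+1) = 2*k-1 by omega, show m+2*k-m = 2*k by omega,
    show (2*k)/2 = k by omega, show m+2*k+m-1 = 2*(k+m)-1 by omega,
    show m+2*k+(m+1) = 2*(k+m)+1 by omega]
  have e1 : ((-1:ℝ))^(m+2*k) = (-1)^m := by
    rw [pow_add, pow_mul, neg_one_sq, one_pow, mul_one]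
  rw [e1, pow_succ]
  have f1 : (Nat.factorial (2*(k+m)+1) : ℝ) = (2*(k+m)+1) * (Nat.factorial (2*(k+m)) : ℝ) := by
    rw [Nat.factorial_succ]; push_cast; ring
  have f2 : (Nat.factorial (2*k) : ℝ) = (2*k) * (Nat.factorial (2*k-1) : ℝ) := by
    rw [show 2*k = (2*k-1)+1 by omega, Nat.factorial_succ]
    push_cast [show 2*k-1+1 = 2*k by omega]
    ring
  have keyR : (2:ℝ)^(m+2*k) * (Nat.factorial (m+2*k) : ℝ)
        * (Nat.doubleFactorial (2*(k+m)-1) : ℝ)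
      = (Nat.factorial (2*(k+m)) : ℝ) * (Nat.choose (m+2*k) k : ℝ)
        * (Nat.doubleFactorial (2*k) : ℝ) := by
    exact_mod_cast key_nat_aux m k hk
  have n1 : (Nat.factorial (2*(k+m)) : ℝ) ≠ 0 := Nat.cast_ne_zero.2 (Nat.factorial_ne_zero _)
  have n2 : (Nat.doubleFactorial (2*(k+m)-1) : ℝ) ≠ 0 :=
    Nat.cast_ne_zero.2 (Nat.doubleFactorial_pos _).ne'
  have n3 : (Nat.factorial (m+2*k) : ℝ) ≠ 0 := Nat.cast_ne_zero.2 (Nat.factorial_ne_zero _)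
  have n4 : (Nat.factorial (2*k-1) : ℝ) ≠ 0 := Nat.cast_ne_zero.2 (Nat.factorial_ne_zero _)
  have n5 : ((m:ℝ)+2*k - m) ≠ 0 := by
    have : (k:ℝ) ≥ 1 := by exact_mod_cast hk
    nlinarith
  have n6 : ((m:ℝ)+2*k + m + 1) ≠ 0 := by positivity
  have n7 : (2:ℝ)^(m+2*k) ≠ 0 := by positivity
  have n8 : ((2*(k+m):ℝ)+1) ≠ 0 := by positivity
  rw [f1, f2]
  push_cast
  field_simp
  linear_combination (-(2 * (k:ℝ) * (2*(k:ℝ)+2*m+1))) * keyR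

end Aux

/-- Complementary Legendre polynomial
`𝒫_ν(x,l) = (1-x²)^(ν-l) · (dᵛ/dtᵛ)(1-t²)^l |_{t=x}` (zpow power). -/
noncomputable def complLegendre (l ν : ℕ) (x : ℝ) : ℝ :=
  (1 - x ^ 2) ^ ((ν : ℤ) - (l : ℤ)) *
    iteratedDeriv ν (fun t : ℝ => (1 - t ^ 2) ^ l) x

/-- Legendre polynomial via Rodrigues' formula. -/
noncomputable def legendreP (l : ℕ) (x : ℝ) : ℝ :=
  (1 / (2 ^ l * (Nat.factorial l : ℝ))) *
    iteratedDeriv l (fun t : ℝ => (t ^ 2 - 1) ^ l) x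

/-- Polynomial part of the associated Legendre function:
`𝒫_l^m(x) = (-1)^m (d^m/dx^m) P_l(x)`. -/
noncomputable def assocLegendreP (l m : ℕ) (x : ℝ) : ℝ :=
  (-1) ^ m * iteratedDeriv m (legendreP l) x

/-- Normalization `N_l^m` (here `(l+m-1)` is natural subtraction, so that for
`l = m = 0` the denominator is `0‼ = 1`, matching the convention `(-1)‼ = 1`). -/
noncomputable def legendreNorm (l m : ℕ) : ℝ :=
  (-1) ^ m * (Nat.choose l ((l - m) / 2) : ℝ) *
    ((Nat.doubleFactorial (l - m) : ℝ) * (Nat.factorial (l - m) : ℝ))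
      / (Nat.doubleFactorial (l + m - 1) : ℝ)

theorem complLegendre_normalization_odd (l m : ℕ) (hm : m < l) (he : Even (l - m))
    (x : ℝ) (hx : x ^ 2 ≠ 1) :
    complLegendre l (l - m - 1) x
      = (legendreNorm l m / (((l : ℝ) - m) * ((l : ℝ) + m + 1)))
          * assocLegendreP l (m + 1) x := by
  obtain ⟨k, hk⟩ := he
  have hl : l = m + 2*k := by omega
  have hk1 : 1 ≤ k := by omega
  have hl1 : 1 ≤ l := by omega
  have hm1 : m + 1 ≤ l := by omega
  set p : ℝ[X] := ((X:ℝ[X])^2-1)^l with hp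
  have t1 : iteratedDeriv (l-m-1) (fun t : ℝ => (1 - t^2)^l) x
      = (-1:ℝ)^l * (derivative^[l-(m+1)] p).eval x := by
    have hfn : (fun t : ℝ => (1 - t^2)^l) = fun y : ℝ => (C ((-1:ℝ)^l) * p).eval y := by
      funext t
      rw [show ((1:ℝ) - t^2) = -(t^2-1) by ring, neg_pow]
      simp [hp]
    rw [hfn, iteratedDeriv_eval_aux, Polynomial.iterate_derivative_C_mul,
      show l-m-1 = l-(m+1) by omega]
    simp
  have t2 : iteratedDeriv (m+1) (legendreP l) x
      = (1/(2^l * (Nat.factorial l : ℝ))) * (derivative^[l+(m+1)] p).eval x := by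
    have hfn : legendreP l
        = fun y : ℝ => (C (1/(2^l * (Nat.factorial l : ℝ))) * derivative^[l] p).eval y := by
      funext y
      unfold legendreP
      rw [show (fun t : ℝ => (t^2-1)^l) = (fun z : ℝ => p.eval z) by funext t; simp [hp]]
      rw [iteratedDeriv_eval_aux]
      simp
    rw [hfn, iteratedDeriv_eval_aux, Polynomial.iterate_derivative_C_mul,
      ← Function.iterate_add_apply, show m+1+l = l+(m+1) by omega]
    simp
  have t3 : (derivative^[l-(m+1)] p).eval x
      = ((Nat.factorial (l-(m+1)) : ℝ)/(Nat.factorial (l+(m+1)) : ℝ))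
          * ((-1:ℝ)^(m+1) * ((1-x^2)^(m+1) * (derivative^[l+(m+1)] p).eval x)) := by
    rw [hp, main_ident_aux l hl1 (m+1) hm1]
    simp only [eval_mul, eval_C, eval_pow, eval_sub, eval_one, eval_X]
    rw [show (x^2-1 : ℝ) = (-1) * (1-x^2) by ring, mul_pow]
    ring
  have t4 : ((1:ℝ) - x^2) ^ (((l-m-1 : ℕ) : ℤ) - (l:ℤ))
      = (((1-x^2)^(m+1))⁻¹ : ℝ) := by
    rw [show ((l-m-1 : ℕ) : ℤ) - (l:ℤ) = -((m+1 : ℕ) : ℤ) by omega, zpow_neg, zpow_natCast]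
  have hx1 : (1:ℝ) - x^2 ≠ 0 := sub_ne_zero.mpr (Ne.symm hx)
  have hcomb : (((1:ℝ)-x^2)^(m+1))⁻¹ * ((1-x^2)^(m+1)) = 1 :=
    inv_mul_cancel₀ (pow_ne_zero _ hx1)
  have hconst := const_ident_aux l m k hk1 hl
  unfold complLegendre assocLegendreP legendreNorm
  rw [t4, t1, t2, t3]
  set T : ℝ := (derivative^[l+(m+1)] p).eval x with hT
  linear_combination ((-1:ℝ)^l * ((Nat.factorial (l-(m+1)) : ℝ)/(Nat.factorial (l+(m+1)) : ℝ))
      * (-1)^(m+1) * T) * hcomb + T * hconst
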